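/- Let z_l^{(1)}, z_l^{(2)} ∈ ℝ³ (l = 1,…,L) be points and c_l^{(1)}, c_l^{(2)} ∈ ℝ³ nonzero vectors such that all the points z_l^{(1)}, z_l^{(2)} are pairwise distinct unless equal by index and superscript. If F(x) := Σ_{l=1}^{L} [⟨∇Γ₀(x - z_l^{(1)}), c_l^{(1)}⟩ - ⟨∇Γ₀(x - z_l^{(2)}), c_l^{(2)}⟩] = 0 for all x in an open set exterior to a ball containing all the points, then z_l^{(1)} = z_l^{(2)} and c_l^{(1)} = c_l^{(2)} for every l (after suitable matching of indices), provided the points z_l^{(j)} within each family are pairwise distinct. -/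

import Mathlib

noncomputable section

abbrev E3 := EuclideanSpace ℝ (Fin 3)

/-- The fundamental solution of the Laplacian in ℝ³. -/
def Γ₀ (x : E3) : ℝ := -1 / (4 * Real.pi * ‖x‖)


open RealInnerProductSpace Filter Topology

/-- Dipole potential in closed form. -/
def dip (z c x : E3) : ℝ := (4 * Real.pi * ‖x - z‖ ^ 3)⁻¹ * ⟪x - z, c⟫

lemma gradient_Γ₀ {y : E3} (hy : y ≠ 0) :
    gradient Γ₀ y = (4 * Real.pi * ‖y‖ ^ 3)⁻¹ • y := by
  have hr : 0 < ‖y‖ := norm_pos_iff.2 hy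
  have hπ : 0 < Real.pi := Real.pi_pos
  set t : ℝ := ‖y‖ ^ 2 with ht
  have ht0 : 0 < t := by positivity
  have hst : Real.sqrt t = ‖y‖ := Real.sqrt_sq (norm_nonneg y)
  have h1 : HasDerivAt (fun s : ℝ => 4 * Real.pi * Real.sqrt s)
      (4 * Real.pi * (1 / (2 * Real.sqrt t))) t :=
    (Real.hasDerivAt_sqrt ht0.ne').const_mul _
  have hne : 4 * Real.pi * Real.sqrt t ≠ 0 := by
    rw [hst]; positivity
  have h2 : HasDerivAt (fun s : ℝ => -1 / (4 * Real.pi * Real.sqrt s))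
      (4 * Real.pi * (1 / (2 * Real.sqrt t)) / (4 * Real.pi * Real.sqrt t) ^ 2) t := by
    have := (h1.inv hne).neg
    simp only [neg_div, neg_neg] at this ⊢
    convert this using 1
    · rfl
    · rfl
    · funext s; simp [one_div]
  have hq : HasFDerivAt (fun x : E3 => ‖x‖ ^ 2) (2 • innerSL ℝ y) y :=
    (hasStrictFDerivAt_norm_sq y).hasFDerivAt
  have h3 := h2.comp_hasFDerivAt y hq
  have hΓ : Γ₀ = fun x : E3 => -1 / (4 * Real.pi * Real.sqrt (‖x‖ ^ 2)) := by
    funext x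
    simp [Γ₀, Real.sqrt_sq (norm_nonneg x)]
  have h4 : HasFDerivAt Γ₀
      ((4 * Real.pi * (1 / (2 * Real.sqrt t)) / (4 * Real.pi * Real.sqrt t) ^ 2) •
        (2 • innerSL ℝ y)) y := by
    rw [hΓ]; exact h3
  have h5 : HasGradientAt Γ₀ ((4 * Real.pi * ‖y‖ ^ 3)⁻¹ • y) y := by
    rw [hasGradientAt_iff_hasFDerivAt]
    convert h4 using 1
    · rfl
    · rfl
    · rfl
    ext v
    simp only [InnerProductSpace.toDual_apply_apply, ContinuousLinearMap.coe_smul',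
      Pi.smul_apply, ContinuousLinearMap.smul_apply, innerSL_apply_apply, smul_eq_mul,
      real_inner_smul_left, hst]
    rw [show ⟪y, v⟫ = ⟪y, v⟫ from rfl]
    field_simp
    ring
  exact h5.gradient

lemma analyticAt_rlog {t : ℝ} (ht : 0 < t) : AnalyticAt ℝ Real.log t := by
  have h1 : AnalyticAt ℂ Complex.log (t : ℂ) :=
    analyticAt_clog (Complex.ofReal_mem_slitPlane.2 ht)
  have h2 : AnalyticAt ℝ (fun s : ℝ => (Complex.log ((s : ℂ))).re) t := by
    have ha : AnalyticAt ℝ (fun s : ℝ => (s : ℂ)) t := Complex.ofRealCLM.analyticAt t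
    have hb : AnalyticAt ℝ (Complex.log ∘ fun s : ℝ => (s : ℂ)) t :=
      (h1.restrictScalars).comp ha
    have hc : AnalyticAt ℝ ((fun w : ℂ => w.re) ∘ (Complex.log ∘ fun s : ℝ => (s : ℂ))) t :=
      (Complex.reCLM.analyticAt _).comp hb
    exact hc
  apply h2.congr
  filter_upwards with s
  simpa using Complex.log_ofReal_re s

lemma analyticAt_normsq {z x : E3} : AnalyticAt ℝ (fun w : E3 => ‖w - z‖ ^ 2) x := by
  have h1 : AnalyticAt ℝ (fun w : E3 => w - z) x := analyticAt_id.sub analyticAt_const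
  have h2 : AnalyticAt ℝ (fun p : E3 × E3 => ⟪p.1, p.2⟫) (x - z, x - z) :=
    (innerSL ℝ (E := E3)).analyticAt_bilinear _
  have h3 : AnalyticAt ℝ ((fun p : E3 × E3 => ⟪p.1, p.2⟫) ∘ (fun w : E3 => (w - z, w - z))) x :=
    AnalyticAt.comp (f := fun w : E3 => (w - z, w - z)) h2 (h1.prod h1)
  apply h3.congr
  filter_upwards with w
  exact real_inner_self_eq_norm_sq _

lemma analyticAt_normcube {z x : E3} (h : x ≠ z) : AnalyticAt ℝ (fun w : E3 => ‖w - z‖ ^ 3) x := by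
  have hx0 : (0:ℝ) < ‖x - z‖ := by
    rw [norm_pos_iff]; exact sub_ne_zero.2 h
  have hq : AnalyticAt ℝ (fun w : E3 => ‖w - z‖ ^ 2) x := analyticAt_normsq
  have hlog : AnalyticAt ℝ (fun w : E3 => Real.exp ((3/2) * Real.log (‖w - z‖ ^ 2))) x := by
    apply AnalyticAt.rexp
    exact (analyticAt_const (v := (3/2 : ℝ))).mul ((analyticAt_rlog (by positivity)).comp hq)
  apply hlog.congr
  have hop : IsOpen {w : E3 | w ≠ z} := isOpen_ne
  filter_upwards [hop.mem_nhds h] with w hw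
  have hw0 : (0:ℝ) < ‖w - z‖ := by rw [norm_pos_iff]; exact sub_ne_zero.2 hw
  rw [Real.log_pow]
  push_cast
  rw [show (3/2 : ℝ) * (2 * Real.log ‖w - z‖) = (3:ℕ) * Real.log ‖w - z‖ by push_cast; ring,
    Real.exp_nat_mul, Real.exp_log hw0]

lemma analyticAt_dip {z c x : E3} (h : x ≠ z) : AnalyticAt ℝ (dip z c) x := by
  have hx0 : (0:ℝ) < ‖x - z‖ := by rw [norm_pos_iff]; exact sub_ne_zero.2 h
  have hπ := Real.pi_pos
  have h1 : AnalyticAt ℝ (fun w : E3 => (4 * Real.pi * ‖w - z‖ ^ 3)⁻¹) x := by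
    apply AnalyticAt.inv (analyticAt_const.mul (analyticAt_normcube h))
    show 4 * Real.pi * ‖x - z‖ ^ 3 ≠ 0
    positivity
  have h2 : AnalyticAt ℝ (fun w : E3 => ⟪w - z, c⟫) x := by
    have h1 : AnalyticAt ℝ (fun w : E3 => w - z) x := analyticAt_id.sub analyticAt_const
    have : AnalyticAt ℝ ((innerSL ℝ (E := E3) c) ∘ fun w : E3 => w - z) x :=
      AnalyticAt.comp (f := fun w : E3 => w - z) ((innerSL ℝ (E := E3) c).analyticAt (x - z)) h1
    apply this.congr
    filter_upwards with w
    simp only [Function.comp_apply, innerSL_apply_apply]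
    exact real_inner_comm _ _
  exact h1.mul h2

lemma blowup {p a : E3} {S : Set E3} (hS : S.Finite) {φ : E3 → ℝ} (hφ : ContinuousAt φ p)
    (h : ∀ x, x ∉ S → x ≠ p → dip p a x + φ x = 0) : a = 0 := by
  by_contra ha
  have hna : (0:ℝ) < ‖a‖ := norm_pos_iff.2 ha
  have hπ := Real.pi_pos
  set x : ℕ → E3 := fun n => p + ((n:ℝ)+1)⁻¹ • a with hx
  have htinv : Tendsto (fun n : ℕ => ((n:ℝ)+1)⁻¹) atTop (𝓝 0) := by
    simpa [one_div] using tendsto_one_div_add_atTop_nhds_zero_nat (𝕜 := ℝ)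
  have htend : Tendsto x atTop (𝓝 p) := by
    have h1 : Tendsto (fun n : ℕ => ((n:ℝ)+1)⁻¹ • a) atTop (𝓝 ((0:ℝ) • a)) :=
      htinv.smul_const a
    have h2 := Filter.Tendsto.add (tendsto_const_nhds (x := p) (f := (atTop : Filter ℕ))) h1
    simpa using h2
  have hxp : ∀ n, x n ≠ p := by
    intro n he
    have h0 : ((n:ℝ)+1)⁻¹ • a = 0 := by
      have := he
      simp only [hx] at this
      simpa [add_eq_left] using this
    rcases smul_eq_zero.1 h0 with h | h
    · have : ((n:ℝ)+1) ≠ 0 := by positivity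
      exact this (inv_eq_zero.1 h)
    · exact ha h
  have hSev : ∀ᶠ n in atTop, x n ∉ S := by
    have hclosed : IsClosed (S \ {p}) := (hS.subset Set.diff_subset).isClosed
    have hp : p ∈ (S \ {p})ᶜ := by simp
    have := htend.eventually (hclosed.isOpen_compl.mem_nhds hp)
    filter_upwards [this] with n hn hnS
    exact hn ⟨hnS, hxp n⟩
  have hdip : ∀ n : ℕ, dip p a (x n) = (4 * Real.pi * ‖a‖)⁻¹ * ((n:ℝ)+1)^2 := by
    intro n
    have ht : (0:ℝ) < ((n:ℝ)+1)⁻¹ := by positivity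
    have hxs : x n - p = ((n:ℝ)+1)⁻¹ • a := by simp [hx]
    rw [dip, hxs, norm_smul, real_inner_smul_left, real_inner_self_eq_norm_sq,
      Real.norm_eq_abs, abs_of_pos ht]
    have hn1 : ((n:ℝ)+1) ≠ 0 := by positivity
    field_simp
  have h1 : Tendsto (fun n => dip p a (x n)) atTop atTop := by
    have hsq : Tendsto (fun n : ℕ => ((n:ℝ)+1)^2) atTop atTop := by
      have hb : Tendsto (fun n : ℕ => ((n:ℝ)+1)) atTop atTop :=
        tendsto_atTop_add_const_right _ 1 tendsto_natCast_atTop_atTop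
      simpa [sq] using hb.atTop_mul_atTop₀ hb
    have := hsq.const_mul_atTop (show (0:ℝ) < (4 * Real.pi * ‖a‖)⁻¹ by positivity)
    simpa [hdip] using this
  have h2 : Tendsto (fun n => dip p a (x n)) atTop (𝓝 (-φ p)) := by
    have hφt : Tendsto (fun n => -φ (x n)) atTop (𝓝 (-φ p)) :=
      ((hφ.tendsto.comp htend).neg)
    apply hφt.congr'
    filter_upwards [hSev] with n hn
    have := h (x n) hn (hxp n)
    linarith
  exact not_tendsto_atTop_of_tendsto_nhds h2 h1

lemma inner_grad {x z : E3} (c : E3) (h : x ≠ z) :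
    ⟪gradient Γ₀ (x - z), c⟫ = dip z c x := by
  rw [gradient_Γ₀ (sub_ne_zero.2 h), dip, real_inner_smul_left]

lemma dip_sub (p u v : E3) (x : E3) : dip p (u - v) x = dip p u x - dip p v x := by
  simp only [dip, inner_sub_right]; ring

/-- Uniqueness for sums of dipole potentials: if two families of dipoles (with pairwise
distinct poles within each family and nonzero strengths) produce the same field on a
nonempty open set exterior to a ball containing all poles, then the families coincide
after a suitable matching of indices. -/
theorem stmt7 (L : ℕ) (z1 z2 : Fin L → E3) (c1 c2 : Fin L → E3)
    (hz1 : Function.Injective z1) (hz2 : Function.Injective z2)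
    (hc1 : ∀ l, c1 l ≠ 0) (hc2 : ∀ l, c2 l ≠ 0)
    (ρ : ℝ) (hρ1 : ∀ l, ‖z1 l‖ < ρ) (hρ2 : ∀ l, ‖z2 l‖ < ρ)
    (V : Set E3) (hV : IsOpen V) (hVne : V.Nonempty) (hVext : V ⊆ {x : E3 | ρ < ‖x‖})
    (hF : ∀ x ∈ V,
      ∑ l : Fin L, ((inner ℝ (gradient Γ₀ (x - z1 l)) (c1 l) : ℝ)
        - (inner ℝ (gradient Γ₀ (x - z2 l)) (c2 l) : ℝ)) = 0) :
    ∃ σ : Equiv.Perm (Fin L), ∀ l, z2 (σ l) = z1 l ∧ c2 (σ l) = c1 l := by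
  classical
  set S : Set E3 := Set.range z1 ∪ Set.range z2 with hSdef
  have hSfin : S.Finite := (Set.finite_range z1).union (Set.finite_range z2)
  set F : E3 → ℝ := fun x => ∑ l : Fin L, (dip (z1 l) (c1 l) x - dip (z2 l) (c2 l) x)
    with hFdef
  have hmem1 : ∀ {x : E3}, x ∉ S → ∀ l, x ≠ z1 l := by
    rintro x hx l rfl
    exact hx (Or.inl ⟨l, rfl⟩)
  have hmem2 : ∀ {x : E3}, x ∉ S → ∀ l, x ≠ z2 l := by
    rintro x hx l rfl
    exact hx (Or.inr ⟨l, rfl⟩)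
  have hanal : AnalyticOnNhd ℝ F Sᶜ := by
    intro x hx
    apply Finset.analyticAt_fun_sum
    intro l _
    exact (analyticAt_dip (hmem1 hx l)).sub (analyticAt_dip (hmem2 hx l))
  have hconn : IsPreconnected (Sᶜ : Set E3) := by
    have hrank : 1 < Module.rank ℝ E3 := by
      rw [← Module.finrank_eq_rank ℝ E3]
      have : Module.finrank ℝ E3 = 3 := finrank_euclideanSpace_fin
      rw [this]
      exact_mod_cast (by norm_num : (1:ℕ) < 3)
    exact (hSfin.countable.isConnected_compl_of_one_lt_rank hrank).isPreconnected
  obtain ⟨x₀, hx₀⟩ := hVne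
  have hVS : V ⊆ Sᶜ := by
    intro x hx hmem
    have hρx : ρ < ‖x‖ := hVext hx
    rcases hmem with ⟨l, rfl⟩ | ⟨l, rfl⟩
    · exact absurd (hρ1 l) (by linarith)
    · exact absurd (hρ2 l) (by linarith)
  have hFzero : Set.EqOn F 0 Sᶜ := by
    apply hanal.eqOn_zero_of_preconnected_of_eventuallyEq_zero hconn (hVS hx₀)
    filter_upwards [hV.mem_nhds hx₀] with x hx
    have hxS : x ∉ S := hVS hx
    have := hF x hx
    rw [Pi.zero_apply, hFdef]
    rw [← this]
    apply Finset.sum_congr rfl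
    intro l _
    rw [inner_grad _ (hmem1 hxS l), inner_grad _ (hmem2 hxS l)]
  have key : ∀ l0, ∃ m, z2 m = z1 l0 ∧ c2 m = c1 l0 := by
    intro l0
    set p := z1 l0 with hp
    set q : E3 := ∑ l : Fin L, if z2 l = p then c2 l else 0 with hq
    set a : E3 := c1 l0 - q with hadef
    set φ : E3 → ℝ := fun x => ∑ l : Fin L,
      ((if z1 l = p then 0 else dip (z1 l) (c1 l) x)
        - (if z2 l = p then 0 else dip (z2 l) (c2 l) x)) with hφdef
    have hdecomp : ∀ x, x ∉ S → x ≠ p → dip p a x + φ x = 0 := by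
      intro x hxS hxp
      have hFx : F x = 0 := hFzero hxS
      have e1 : ∑ l : Fin L, (if z1 l = p then dip (z1 l) (c1 l) x else 0)
          = dip p (c1 l0) x := by
        have hcg : ∀ l ∈ Finset.univ, (if z1 l = p then dip (z1 l) (c1 l) x else 0)
            = (if l = l0 then dip p (c1 l0) x else 0) := by
          intro l _
          by_cases hzl : z1 l = p
          · have hl : l = l0 := hz1 (by rw [hzl, hp])
            subst hl
            simp [hzl]
          · have hl : l ≠ l0 := fun e => hzl (by rw [e, ← hp])
            simp [hzl, hl]
        rw [Finset.sum_congr rfl hcg,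
          Finset.sum_ite_eq' Finset.univ l0 (fun _ => dip p (c1 l0) x),
          if_pos (Finset.mem_univ _)]
      have e2 : ∑ l : Fin L, (if z2 l = p then dip (z2 l) (c2 l) x else 0)
          = dip p q x := by
        rw [hq, dip, inner_sum, Finset.mul_sum]
        apply Finset.sum_congr rfl
        intro l _
        by_cases hzl : z2 l = p
        · rw [if_pos hzl, if_pos hzl, dip, hzl]
        · rw [if_neg hzl, if_neg hzl, inner_zero_right, mul_zero]
      have hsum : F x = (dip p (c1 l0) x - dip p q x) + φ x := by
        simp only [hFdef, hφdef]
        have hterm : ∀ l : Fin L,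
            dip (z1 l) (c1 l) x - dip (z2 l) (c2 l) x
            = ((if z1 l = p then dip (z1 l) (c1 l) x else 0)
                - (if z2 l = p then dip (z2 l) (c2 l) x else 0))
              + ((if z1 l = p then 0 else dip (z1 l) (c1 l) x)
                - (if z2 l = p then 0 else dip (z2 l) (c2 l) x)) := by
          intro l
          by_cases ha : z1 l = p <;> by_cases hb : z2 l = p <;> simp [ha, hb] <;> ring
        rw [Finset.sum_congr rfl (fun l _ => hterm l), Finset.sum_add_distrib,
          Finset.sum_sub_distrib, e1, e2]
      have : dip p a x = dip p (c1 l0) x - dip p q x := by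
        rw [hadef, dip_sub]
      rw [this, ← hsum, hFx]
    have hφcont : ContinuousAt φ p := by
      have hterm : ∀ l : Fin L, ContinuousAt (fun x =>
          (if z1 l = p then 0 else dip (z1 l) (c1 l) x)
          - (if z2 l = p then 0 else dip (z2 l) (c2 l) x)) p := by
        intro l
        apply ContinuousAt.sub
        · by_cases hc : z1 l = p
          · simp only [if_pos hc]; exact continuousAt_const
          · simp only [if_neg hc]
            exact (analyticAt_dip (fun e => hc e.symm)).continuousAt
        · by_cases hc : z2 l = p
          · simp only [if_pos hc]; exact continuousAt_const
          · simp only [if_neg hc]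
            exact (analyticAt_dip (fun e => hc e.symm)).continuousAt
      exact tendsto_finset_sum _ (fun l _ => hterm l)
    have ha0 : a = 0 := blowup hSfin hφcont hdecomp
    have hceq : c1 l0 = q := by
      have := sub_eq_zero.1 ha0
      exact this
    by_cases hex : ∃ m, z2 m = p
    · obtain ⟨m, hm⟩ := hex
      have hqval : q = c2 m := by
        have hcg : ∀ l ∈ Finset.univ, (if z2 l = p then c2 l else 0)
            = (if l = m then c2 m else 0) := by
          intro l _
          by_cases hzl : z2 l = p
          · have hl : l = m := hz2 (by rw [hzl, hm])
            subst hl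
            simp [hzl]
          · have hl : l ≠ m := fun e => hzl (by rw [e, hm])
            simp [hzl, hl]
        rw [hq, Finset.sum_congr rfl hcg,
          Finset.sum_ite_eq' Finset.univ m (fun _ => c2 m),
          if_pos (Finset.mem_univ _)]
      exact ⟨m, hm, by rw [← hqval, ← hceq]⟩
    · push_neg at hex
      have hq0 : q = 0 := by
        rw [hq]
        apply Finset.sum_eq_zero
        intro l _
        rw [if_neg (hex l)]
      exact absurd (hceq.trans hq0) (hc1 l0)
  choose τ hτ1 hτ2 using key
  have hinj : Function.Injective τ := by
    intro l l' h
    exact hz1 (by rw [← hτ1 l, ← hτ1 l', h])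
  exact ⟨Equiv.ofBijective τ (Finite.injective_iff_bijective.1 hinj),
    fun l => ⟨hτ1 l, hτ2 l⟩⟩


end
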